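/- For every w ∈ ℂ, the identity |w² + 6w + 12|² − |w² − 6w + 12|² = 24·Re(w)·(|w|² + 12) holds. Consequently, if Re(w) ≥ 0 and w² + 6w + 12 ≠ 0, then the amplification factor G₂ = (w² − 6w + 12)/(w² + 6w + 12) of the third-order-in-time scheme at the full time step satisfies |G₂| ≤ 1. -/

import Mathlib

/-- `|w² + 6w + 12|² - |w² - 6w + 12|² = 24 Re(w)(|w|² + 12)`; hence if
`Re w ≥ 0` and `w² + 6w + 12 ≠ 0`, the third-order amplification factor
`G₂ = (w² - 6w + 12)/(w² + 6w + 12)` satisfies `|G₂| ≤ 1`. -/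
theorem stmt_18 (w : ℂ) :
    (‖w ^ 2 + 6 * w + 12‖ ^ 2 - ‖w ^ 2 - 6 * w + 12‖ ^ 2 =
        24 * w.re * (‖w‖ ^ 2 + 12)) ∧
      (0 ≤ w.re → w ^ 2 + 6 * w + 12 ≠ 0 →
        ‖(w ^ 2 - 6 * w + 12) / (w ^ 2 + 6 * w + 12)‖ ≤ 1) := by
  have e12 : ((12 : ℂ)).re = 12 ∧ ((12 : ℂ)).im = 0 := by norm_num
  have e6 : ((6 : ℂ)).re = 6 ∧ ((6 : ℂ)).im = 0 := by norm_num
  have key : ‖w ^ 2 + 6 * w + 12‖ ^ 2 - ‖w ^ 2 - 6 * w + 12‖ ^ 2 =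
      24 * w.re * (‖w‖ ^ 2 + 12) := by
    simp only [Complex.sq_norm]
    simp only [Complex.normSq_apply, Complex.add_re, Complex.add_im,
      Complex.mul_re, Complex.mul_im, Complex.sub_re, Complex.sub_im, pow_two,
      e12.1, e12.2, e6.1, e6.2]
    ring
  refine ⟨key, fun hre hne => ?_⟩
  have hpos : 0 < ‖w ^ 2 + 6 * w + 12‖ := by
    simpa using norm_pos_iff.mpr hne
  rw [norm_div, div_le_one hpos]
  have h1 : ‖w ^ 2 - 6 * w + 12‖ ^ 2 ≤ ‖w ^ 2 + 6 * w + 12‖ ^ 2 := by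
    nlinarith [norm_nonneg w, sq_nonneg ‖w‖]
  nlinarith [norm_nonneg (w ^ 2 - 6 * w + 12), h1, hpos]
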